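/- Let E be a normed space and let (Aₙ)ₙ∈ℕ be a sequence of unbounded subsets of E. Then there exists a continuous linear functional χ in the closed unit ball of the dual E' such that for every n ∈ ℕ, the set Aₙ \ {x ∈ E : |χ(x)| < 1/2} is nonempty. -/

import Mathlib

open Filter Topology Set

set_option maxHeartbeats 1000000 in
set_option synthInstance.maxHeartbeats 400000 in
/-- Lemma 3.1: for a sequence of unbounded subsets of a normed space `E`, there is a functional
`χ` in the closed unit ball of the dual such that each `Aₙ` is not contained in
`{x | |χ x| < 1/2}`. -/
theorem exists_functional_separating_unbounded_sets
    {E : Type*} [NormedAddCommGroup E] [NormedSpace ℝ E]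
    (A : ℕ → Set E) (hA : ∀ n, ¬ Bornology.IsBounded (A n)) :
    ∃ χ : E →L[ℝ] ℝ, ‖χ‖ ≤ 1 ∧
      ∀ n : ℕ, (A n \ {x : E | |χ x| < 1/2}).Nonempty := by
  set B : Set (E →L[ℝ] ℝ) := Metric.closedBall 0 1 with hB
  haveI : CompleteSpace B := Metric.isClosed_closedBall.completeSpace_coe
  -- the open sets
  set U : ℕ → Set B := fun n => {χ : B | ∃ a ∈ A n, 1/2 < |(χ : E →L[ℝ] ℝ) a|} with hU
  have hopen : ∀ n, IsOpen (U n) := by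
    intro n
    have : U n = ⋃ a ∈ A n, {χ : B | 1/2 < |(χ : E →L[ℝ] ℝ) a|} := by
      ext χ; simp [hU]
    rw [this]
    refine isOpen_biUnion fun a _ => ?_
    have hc : Continuous fun χ : B => |(χ : E →L[ℝ] ℝ) a| := by
      have h1 : Continuous fun f : E →L[ℝ] ℝ => f a :=
        (ContinuousLinearMap.apply ℝ ℝ a).continuous
      exact (h1.comp continuous_subtype_val).abs
    exact isOpen_lt continuous_const hc
  have hdense : ∀ n, Dense (U n) := by
    intro n
    rw [Metric.dense_iff]
    rintro ⟨χ, hχ⟩ r hr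
    -- pick ε small
    set ε : ℝ := min (r/2) 1 with hε
    have hε0 : 0 < ε := lt_min (half_pos hr) one_pos
    have hε1 : ε ≤ 1 := min_le_right _ _
    -- pick a ∈ A n with large norm
    obtain ⟨a, ha, hna⟩ : ∃ a ∈ A n, 4 / ε < ‖a‖ := by
      by_contra h
      push_neg at h
      exact hA n (isBounded_iff_forall_norm_le.2 ⟨4 / ε, h⟩)
    have ha0 : a ≠ 0 := by
      intro h
      rw [h, norm_zero] at hna
      exact absurd hna (not_lt.2 (by positivity))
    obtain ⟨ψ, hψ1, hψa⟩ := exists_dual_vector ℝ a (norm_ne_zero_iff.mpr ha0)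
    have hχn : ‖χ‖ ≤ 1 := by simpa [hB] using hχ
    set s : ℝ := if 0 ≤ χ a then 1 else -1 with hs
    have hs1 : |s| = 1 := by
      rw [hs]; split <;> simp
    have hsχ : s * χ a = |χ a| := by
      rw [hs]; split
      · simp [abs_of_nonneg ‹_›]
      · rw [abs_of_neg (lt_of_not_ge ‹_›)]; ring
    set χ' : E →L[ℝ] ℝ := (1 - ε/2) • χ + (ε/2 * s) • ψ with hχ'
    have e1 : ‖(1 - ε/2) • χ‖ ≤ 1 - ε/2 := by
      refine (ContinuousLinearMap.opNorm_smul_le _ _).trans ?_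
      rw [Real.norm_eq_abs, abs_of_nonneg (by linarith : (0:ℝ) ≤ 1 - ε/2)]
      nlinarith [norm_nonneg χ]
    have e2 : ‖(ε/2 * s) • ψ‖ ≤ ε/2 := by
      refine (ContinuousLinearMap.opNorm_smul_le _ _).trans ?_
      rw [Real.norm_eq_abs, abs_mul, hs1, hψ1,
        abs_of_nonneg (by linarith : (0:ℝ) ≤ ε/2)]
      linarith
    have hχ'n : ‖χ'‖ ≤ 1 := by
      have := norm_add_le ((1 - ε/2) • χ) ((ε/2 * s) • ψ)
      rw [hχ']; linarith
    have hmem : χ' ∈ B := by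
      simpa [hB] using hχ'n
    have hval : 1/2 < |χ' a| := by
      have h1 : s * χ' a = (1 - ε/2) * |χ a| + ε/2 * ‖a‖ := by
        have : s * s = 1 := by rw [hs]; split <;> norm_num
        simp only [hχ', ContinuousLinearMap.add_apply, ContinuousLinearMap.smul_apply,
          smul_eq_mul, hψa]
        calc s * ((1 - ε/2) * χ a + ε/2 * s * ‖a‖)
            = (1 - ε/2) * (s * χ a) + ε/2 * (s * s) * ‖a‖ := by ring
          _ = (1 - ε/2) * |χ a| + ε/2 * ‖a‖ := by rw [hsχ, this]; ring
      have h2 : s * χ' a ≤ |χ' a| := by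
        calc s * χ' a ≤ |s * χ' a| := le_abs_self _
          _ = |χ' a| := by rw [abs_mul, hs1, one_mul]
      have h3 : (2:ℝ) ≤ ε/2 * ‖a‖ := by
        have : 4 / ε ≤ ‖a‖ := le_of_lt hna
        have h4 : 4 ≤ ε * ‖a‖ := by
          rw [div_le_iff₀ hε0] at this
          linarith [this]
        linarith
      have h5 : 0 ≤ (1 - ε/2) * |χ a| := by
        have : (0:ℝ) ≤ 1 - ε/2 := by linarith
        positivity
      linarith
    have hdist : dist (⟨χ', hmem⟩ : B) ⟨χ, hχ⟩ < r := by
      have : χ' - χ = (-(ε/2)) • χ + (ε/2 * s) • ψ := by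
        rw [hχ']; module
      have hd : ‖χ' - χ‖ ≤ ε := by
        rw [this]
        have e3 : ‖(-(ε/2)) • χ‖ ≤ ε/2 := by
          refine (ContinuousLinearMap.opNorm_smul_le _ _).trans ?_
          rw [Real.norm_eq_abs, abs_neg,
            abs_of_nonneg (by linarith : (0:ℝ) ≤ ε/2)]
          nlinarith [norm_nonneg χ]
        have := norm_add_le ((-(ε/2)) • χ) ((ε/2 * s) • ψ)
        linarith
      have : dist (⟨χ', hmem⟩ : B) ⟨χ, hχ⟩ = ‖χ' - χ‖ := by
        rw [Subtype.dist_eq, dist_eq_norm]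
      rw [this]
      have h6 : ε ≤ r/2 := min_le_left _ _
      linarith
    exact ⟨⟨χ', hmem⟩, Metric.mem_ball.2 hdist, ⟨a, ha, hval⟩⟩
  have hne : (⋂ n, U n).Nonempty := by
    have hd := dense_iInter_of_isOpen_nat hopen hdense
    have : Nonempty B := ⟨⟨0, by simp [hB]⟩⟩
    exact hd.nonempty
  obtain ⟨⟨χ, hχ⟩, hχU⟩ := hne
  refine ⟨χ, by simpa [hB] using hχ, fun n => ?_⟩
  obtain ⟨a, ha, hva⟩ := mem_iInter.1 hχU n
  exact ⟨a, ha, fun h => absurd h (not_lt.2 (le_of_lt hva))⟩
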